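/- Let a_1,...,a_d be positive integers, v_i = a_i e_i for 1 ≤ i ≤ d, and let v_{d+1},...,v_q ∈ N^d. Set α_0 = (1/a_1,...,1/a_d) and P = conv({v_1,...,v_d} ∪ {v_i : d < i ≤ q, ⟨v_i, α_0⟩ < 1}). Then Q_+^d + conv(v_1,...,v_q) = Q_+^d + P. -/

import Mathlib

open Pointwise

/-- Let `a 1, …, a d` be positive integers, `v i = a i • e i` for `i ≤ d`,
`v (d+1), …, v q ∈ ℕ^d`, `α₀ = (1/a 1, …, 1/a d)`, and
`P = conv({v 1, …, v d} ∪ {v i : ⟨v i, α₀⟩ < 1})`.  Then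
`ℚ₊^d + conv(v 1, …, v q) = ℚ₊^d + P`. -/
theorem newton_polyhedron_reduction (d q : ℕ) (hdq : d ≤ q)
    (a : Fin d → ℕ) (ha : ∀ i, 0 < a i)
    (v : Fin q → (Fin d → ℚ))
    (hv1 : ∀ i : Fin d, v (Fin.castLE hdq i) = Pi.single i (a i : ℚ))
    (hvnat : ∀ i j, ∃ m : ℕ, v i j = (m : ℚ)) :
    {x : Fin d → ℚ | ∀ j, 0 ≤ x j} + convexHull ℚ (Set.range v) =
      {x : Fin d → ℚ | ∀ j, 0 ≤ x j} +
        convexHull ℚ ((Set.range fun i : Fin d => v (Fin.castLE hdq i)) ∪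
          {x | (∃ i, v i = x) ∧ ∑ j, x j / (a j : ℚ) < 1}) := by
  set A : Set (Fin d → ℚ) := {x | ∀ j, 0 ≤ x j} with hA
  set S : Set (Fin d → ℚ) := (Set.range fun i : Fin d => v (Fin.castLE hdq i)) ∪
      {x | (∃ i, v i = x) ∧ ∑ j, x j / (a j : ℚ) < 1} with hS
  have hSsub : S ⊆ Set.range v := by
    rintro x (⟨i, rfl⟩ | ⟨⟨i, rfl⟩, -⟩)
    · exact ⟨_, rfl⟩
    · exact ⟨_, rfl⟩
  have hAconv : Convex ℚ A := fun x hx y hy s t hs htt _ j => by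
    simpa using add_nonneg (mul_nonneg hs (hx j)) (mul_nonneg htt (hy j))
  have hvnn : ∀ i j, 0 ≤ v i j := fun i j => by
    obtain ⟨m, hm⟩ := hvnat i j; rw [hm]; positivity
  apply Set.Subset.antisymm
  · have key : Set.range v ⊆ A + convexHull ℚ S := by
      rintro _ ⟨i, rfl⟩
      by_cases h : ∑ j, v i j / (a j : ℚ) < 1
      · exact ⟨0, fun j => le_refl 0, v i,
          subset_convexHull ℚ S (Or.inr ⟨⟨i, rfl⟩, h⟩), by simp⟩
      · push_neg at h
        set t := ∑ j, v i j / (a j : ℚ) with ht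
        have ht0 : (0:ℚ) < t := lt_of_lt_of_le one_pos h
        have hyD : (fun j => v i j / t) ∈ convexHull ℚ S := by
          have hsum : ∑ j : Fin d, v i j / ((a j : ℚ) * t) = 1 := by
            have : ∑ j : Fin d, v i j / ((a j : ℚ) * t)
                = (∑ j, v i j / (a j : ℚ)) / t := by
              rw [Finset.sum_div]
              exact Finset.sum_congr rfl fun j _ => by rw [div_div]
            rw [this, ← ht, div_self ht0.ne']
          have hmem := (convex_convexHull ℚ S).sum_mem
            (t := Finset.univ)
            (w := fun j : Fin d => v i j / ((a j : ℚ) * t))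
            (z := fun j : Fin d => v (Fin.castLE hdq j))
            (fun j _ => div_nonneg (hvnn i j) (by positivity)) hsum
            (fun j _ => subset_convexHull ℚ S (Or.inl ⟨j, rfl⟩))
          have heq : ∑ j : Fin d, (v i j / ((a j : ℚ) * t)) • v (Fin.castLE hdq j)
              = fun j => v i j / t := by
            have : ∀ j : Fin d, (v i j / ((a j : ℚ) * t)) • v (Fin.castLE hdq j)
                = Pi.single j (v i j / t) := by
              intro j
              rw [hv1 j, ← Pi.single_smul']
              have haj : ((a j : ℚ)) ≠ 0 := by
                exact_mod_cast (ha j).ne'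
              field_simp
              congr 1
              rw [smul_eq_mul, div_mul_eq_mul_div, mul_comm (a j : ℚ) t, mul_div_mul_right _ _ haj]
            rw [Finset.sum_congr rfl fun j _ => this j]
            exact Finset.univ_sum_single _
          rw [heq] at hmem
          exact hmem
        refine ⟨fun j => v i j - v i j / t, ?_, fun j => v i j / t, hyD, ?_⟩
        · intro j
          have : v i j / t ≤ v i j := by
            rw [div_le_iff₀ ht0]
            nlinarith [hvnn i j]
          simpa using sub_nonneg.mpr this
        · funext j; simp
    have hconv : Convex ℚ (A + convexHull ℚ S) :=
      hAconv.add (convex_convexHull ℚ S)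
    have hsub : convexHull ℚ (Set.range v) ⊆ A + convexHull ℚ S :=
      convexHull_min key hconv
    rintro x ⟨u, hu, c, hc, rfl⟩
    obtain ⟨w, hw, y, hy, rfl⟩ := hsub hc
    exact ⟨u + w, fun j => add_nonneg (hu j) (hw j), y, hy, add_assoc u w y⟩
  · exact Set.add_subset_add_left (convexHull_mono hSsub)
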